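/- (Heins) Let A > 1 and let F : ℍ → ℍ be a holomorphic self-map of the upper half-plane satisfying F(Az) = A·F(z) for all z ∈ ℍ. Then there exists μ > 0 such that F(w) = μw for all w ∈ ℍ. -/

import Mathlib

open Complex Metric Set

lemma heins_aux_abs_lt {a b : ℂ} (ha : 0 < a.im) (hb : 0 < b.im) :
    ‖a - b‖ < ‖a - (starRingEnd ℂ) b‖ := by
  rw [Complex.norm_def, Complex.norm_def]
  apply Real.sqrt_lt_sqrt (Complex.normSq_nonneg _)
  simp only [Complex.normSq_apply, Complex.sub_re, Complex.sub_im, Complex.conj_re,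
    Complex.conj_im]
  nlinarith [ha, hb]

lemma heins_aux_ne {a b : ℂ} (ha : 0 < a.im) (hb : 0 < b.im) :
    a - (starRingEnd ℂ) b ≠ 0 := by
  intro h
  apply_fun Complex.im at h
  simp only [Complex.sub_im, Complex.conj_im, Complex.zero_im] at h
  linarith

lemma heins_aux_mem_ball {a b : ℂ} (ha : 0 < a.im) (hb : 0 < b.im) :
    (a - b) / (a - (starRingEnd ℂ) b) ∈ Metric.ball (0:ℂ) 1 := by
  rw [mem_ball_zero_iff, norm_div, div_lt_one]
  · exact heins_aux_abs_lt ha hb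
  · exact (norm_nonneg _).trans_lt (heins_aux_abs_lt ha hb)

lemma heins_aux_psi_im {w : ℂ} (hw : w ∈ Metric.ball (0:ℂ) 1) :
    0 < (Complex.I * (1 + w) / (1 - w)).im := by
  rw [mem_ball_zero_iff] at hw
  have h1 : Complex.normSq w < 1 := by
    have := Complex.sq_norm w
    nlinarith [norm_nonneg w, hw, Complex.sq_norm w]
  have h2 : w ≠ 1 := by rintro rfl; simp at hw
  have h3 : 0 < Complex.normSq (1 - w) := Complex.normSq_pos.2 (sub_ne_zero.2 (Ne.symm h2))
  rw [Complex.div_im]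
  have hre : (Complex.I * (1 + w)).re = -w.im := by simp
  have him : (Complex.I * (1 + w)).im = 1 + w.re := by simp
  rw [hre, him]
  simp only [Complex.sub_re, Complex.sub_im, Complex.one_re, Complex.one_im]
  rw [Complex.normSq_apply] at h1
  rw [div_sub_div_same]
  apply div_pos _ h3
  nlinarith

/-- Heins' theorem on maps commuting with a hyperbolic automorphism. -/
theorem heins (A : ℝ) (hA : 1 < A) (F : ℂ → ℂ)
    (hd : DifferentiableOn ℂ F {z : ℂ | 0 < z.im})
    (hm : Set.MapsTo F {z : ℂ | 0 < z.im} {z : ℂ | 0 < z.im})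
    (hcomm : ∀ z : ℂ, 0 < z.im → F (A * z) = A * F z) :
    ∃ μ : ℝ, 0 < μ ∧ ∀ z : ℂ, 0 < z.im → F z = μ * z := by
  have hI : (Complex.I : ℂ) ∈ {z : ℂ | 0 < z.im} := by simp
  set w₀ : ℂ := F Complex.I with hw₀def
  have hw₀ : 0 < w₀.im := hm hI
  set ψ : ℂ → ℂ := fun w => Complex.I * (1 + w) / (1 - w) with hψ
  set C : ℂ → ℂ := fun v => (v - w₀) / (v - (starRingEnd ℂ) w₀) with hC
  set f : ℂ → ℂ := fun w => C (F (ψ w)) with hf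
  have hψmem : ∀ w ∈ Metric.ball (0:ℂ) 1, 0 < (ψ w).im := fun w hw => heins_aux_psi_im hw
  have hψ0 : ψ 0 = Complex.I := by simp [hψ]
  have hf0 : f 0 = 0 := by
    simp only [hf, hψ0, ← hw₀def, hC, sub_self, zero_div]
  have hmaps : Set.MapsTo f (Metric.ball (0:ℂ) 1) (Metric.ball (f 0) 1) := by
    rw [hf0]
    intro w hw
    exact heins_aux_mem_ball (hm (hψmem w hw)) hw₀
  have hψdiff : DifferentiableOn ℂ ψ (Metric.ball (0:ℂ) 1) := by
    apply DifferentiableOn.div (by fun_prop) (by fun_prop)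
    intro w hw
    rw [mem_ball_zero_iff] at hw
    intro h
    have : w = 1 := by linear_combination -h
    rw [this] at hw
    simp at hw
  have hCdiff : DifferentiableOn ℂ C {z : ℂ | 0 < z.im} := by
    apply DifferentiableOn.div (by fun_prop) (by fun_prop)
    intro v hv
    exact heins_aux_ne hv hw₀
  have hdiff : DifferentiableOn ℂ f (Metric.ball (0:ℂ) 1) := by
    have h1 : DifferentiableOn ℂ (F ∘ ψ) (Metric.ball (0:ℂ) 1) :=
      hd.comp hψdiff hψmem
    have h2 : DifferentiableOn ℂ (C ∘ (F ∘ ψ)) (Metric.ball (0:ℂ) 1) :=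
      hCdiff.comp h1 (fun w hw => hm (hψmem w hw))
    exact h2
  have hA1 : (0:ℝ) < A + 1 := by linarith
  have hA1' : (0:ℝ) < A - 1 := by linarith
  set r : ℝ := (A - 1) / (A + 1) with hrdef
  have hr0 : 0 < r := div_pos hA1' hA1
  have hr1 : r < 1 := by rw [hrdef, div_lt_one hA1]; linarith
  have hrball : (r:ℂ) ∈ Metric.ball (0:ℂ) 1 := by
    rw [mem_ball_zero_iff, Complex.norm_real, Real.norm_eq_abs, abs_of_pos hr0]
    exact hr1
  have hrne : (r:ℂ) ≠ 0 := Complex.ofReal_ne_zero.2 hr0.ne'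
  have hAC1 : ((A:ℂ) + 1) ≠ 0 := by
    have : ((A+1:ℝ):ℂ) ≠ 0 := Complex.ofReal_ne_zero.2 hA1.ne'
    push_cast at this; exact this
  have hψr : ψ (r:ℂ) = (A:ℂ) * Complex.I := by
    simp only [hψ, hrdef]
    push_cast
    rw [show (1:ℂ) - ((A:ℂ) - 1)/((A:ℂ) + 1) = 2/((A:ℂ)+1) by field_simp; ring,
      show (1:ℂ) + ((A:ℂ) - 1)/((A:ℂ) + 1) = 2*(A:ℂ)/((A:ℂ)+1) by field_simp; ring]
    field_simp
  have hFAI : F ((A:ℂ) * Complex.I) = (A:ℂ) * w₀ := by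
    rw [hcomm Complex.I (by simp), hw₀def]
  have hden_im : 0 < ((A:ℂ) * w₀).im := by
    rw [Complex.mul_im]
    simp only [Complex.ofReal_re, Complex.ofReal_im]
    nlinarith
  have hdenne : (A:ℂ) * w₀ - (starRingEnd ℂ) w₀ ≠ 0 := heins_aux_ne hden_im hw₀
  have hfr : f (r:ℂ) = ((A:ℂ) * w₀ - w₀) / ((A:ℂ) * w₀ - (starRingEnd ℂ) w₀) := by
    simp only [hf, hψr, hFAI, hC]
  have hds : ‖dslope f 0 (r:ℂ)‖ ≤ 1 := by
    have := Complex.norm_dslope_le_div_of_mapsTo_ball hdiff (hmaps.mono_right ball_subset_closedBall) hrball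
    simpa using this
  have hfr_eq : f (r:ℂ) = dslope f 0 (r:ℂ) * (r:ℂ) := by
    rw [dslope_of_ne _ hrne, slope_def_field, hf0]
    field_simp
    ring
  have hfrle : ‖f (r:ℂ)‖ ≤ r := by
    rw [hfr_eq, norm_mul]
    calc ‖dslope f 0 (r:ℂ)‖ * ‖(r:ℂ)‖
        ≤ 1 * ‖(r:ℂ)‖ := by
          apply mul_le_mul_of_nonneg_right _ (norm_nonneg _)
          simpa using hds
      _ = r := by rw [one_mul, Complex.norm_real, Real.norm_eq_abs, abs_of_pos hr0]
  have hx : w₀.re = 0 := by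
    have hnum : (A:ℂ) * w₀ - w₀ = ((A - 1 : ℝ):ℂ) * w₀ := by push_cast; ring
    rw [hfr, norm_div, hnum, norm_mul, Complex.norm_real, Real.norm_eq_abs, abs_of_pos hA1'] at hfrle
    have hdpos : 0 < ‖(A:ℂ) * w₀ - (starRingEnd ℂ) w₀‖ :=
      norm_pos_iff.2 hdenne
    rw [div_le_div_iff₀ hdpos hA1] at hfrle
    -- (A-1) * |w₀| * (A+1) ≤ (A-1) * |den|
    have habs : (A + 1) * ‖w₀‖ ≤ ‖(A:ℂ) * w₀ - (starRingEnd ℂ) w₀‖ := by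
      nlinarith [norm_nonneg w₀]
    have hsq : (A + 1)^2 * Complex.normSq w₀ ≤
        Complex.normSq ((A:ℂ) * w₀ - (starRingEnd ℂ) w₀) := by
      have h1 := Complex.sq_norm w₀
      have h2 := Complex.sq_norm ((A:ℂ) * w₀ - (starRingEnd ℂ) w₀)
      nlinarith [norm_nonneg w₀, norm_nonneg ((A:ℂ) * w₀ - (starRingEnd ℂ) w₀)]
    have hre2 : w₀.re ^ 2 ≤ 0 := by
      simp only [Complex.normSq_apply, Complex.sub_re, Complex.sub_im, Complex.mul_re,
        Complex.mul_im, Complex.conj_re, Complex.conj_im, Complex.ofReal_re,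
        Complex.ofReal_im] at hsq
      nlinarith
    exact pow_eq_zero_iff (n := 2) (by norm_num) |>.1 (le_antisymm hre2 (sq_nonneg _))
  set μ : ℝ := w₀.im with hμdef
  have hμ : 0 < μ := hw₀
  have hw₀I : w₀ = (μ:ℝ) * Complex.I := by
    apply Complex.ext <;> simp [hx, hμdef]
  have hμC : ((μ:ℝ):ℂ) ≠ 0 := Complex.ofReal_ne_zero.2 hμ.ne'
  have hfr2 : f (r:ℂ) = (r:ℂ) := by
    rw [hfr, hw₀I]
    rw [show (starRingEnd ℂ) ((μ:ℝ) * Complex.I) = -((μ:ℝ) * Complex.I) by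
      simp [Complex.conj_I]]
    rw [hrdef]
    push_cast
    have hd2 : (A:ℂ) * ((μ:ℝ) * Complex.I) - -((μ:ℝ) * Complex.I) ≠ 0 := by
      rw [show (A:ℂ) * ((μ:ℝ) * Complex.I) - -((μ:ℝ) * Complex.I)
          = ((A:ℂ)+1) * (μ:ℝ) * Complex.I by ring]
      exact mul_ne_zero (mul_ne_zero hAC1 hμC) Complex.I_ne_zero
    rw [div_eq_div_iff hd2 hAC1]
    ring
  have hds1 : dslope f 0 (r:ℂ) = 1 := by
    have h := hfr_eq
    rw [hfr2] at h
    have := mul_right_cancel₀ hrne (by rw [← h, one_mul] : dslope f 0 (r:ℂ) * (r:ℂ) = 1 * (r:ℂ))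
    exact this
  have heq := Complex.affine_of_mapsTo_ball_of_exists_norm_dslope_eq_div hdiff (hmaps.mono_right ball_subset_closedBall) hrball
    (by rw [hds1]; simp)
  refine ⟨μ, hμ, fun z hz => ?_⟩
  have hzI : z + Complex.I ≠ 0 := by
    intro h
    apply_fun Complex.im at h
    simp only [Complex.add_im, Complex.I_im, Complex.zero_im] at h
    linarith
  have hwmem : (z - Complex.I) / (z + Complex.I) ∈ Metric.ball (0:ℂ) 1 := by
    have := heins_aux_mem_ball (a := z) (b := Complex.I) hz (by simp)
    simpa [Complex.conj_I, sub_neg_eq_add] using this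
  have hψw : ψ ((z - Complex.I) / (z + Complex.I)) = z := by
    simp only [hψ]
    rw [show (1:ℂ) - (z - Complex.I)/(z + Complex.I) = 2*Complex.I/(z + Complex.I) by
        field_simp; ring,
      show (1:ℂ) + (z - Complex.I)/(z + Complex.I) = 2*z/(z + Complex.I) by
        field_simp; ring]
    field_simp
  have hfw := heq hwmem
  simp only [hf0, sub_zero, smul_eq_mul, hds1, mul_one, zero_add] at hfw
  rw [hf] at hfw
  simp only at hfw
  rw [hψw, hC] at hfw
  rw [hw₀I] at hfw
  rw [show (starRingEnd ℂ) ((μ:ℝ) * Complex.I) = -((μ:ℝ) * Complex.I) by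
    simp [Complex.conj_I]] at hfw
  have hFz : 0 < (F z).im := hm hz
  have hFzI : F z - -((μ:ℝ) * Complex.I) ≠ 0 := by
    intro h
    apply_fun Complex.im at h
    simp only [Complex.sub_im, Complex.neg_im, Complex.mul_im, Complex.ofReal_re,
      Complex.ofReal_im, Complex.I_im, Complex.I_re, Complex.zero_im] at h
    nlinarith
  have hcross := (div_eq_div_iff hFzI hzI).1 hfw
  have hkey : (2 * Complex.I) * F z = (2 * Complex.I) * ((μ:ℝ) * z) := by
    linear_combination hcross
  have h2I : (2 * Complex.I : ℂ) ≠ 0 := by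
    simp [Complex.I_ne_zero]
  exact mul_left_cancel₀ h2I hkey
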